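/- (Perturbation bound) Let E̅₀, E̅₀' be initial upper expectation functionals and T̅, T̅' upper transition operators. Set Eₙ = d(E̅₀∘T̅ⁿ, E̅₀'∘T̅'ⁿ), E₀ = d(E̅₀, E̅₀'), D = d(T̅, T̅'), and ρᵢ = ρ(T̅ⁱ) the weak coefficient of ergodicity of T̅ⁱ. Then Eₙ ≤ E₀·ρₙ + D·Σ_{i=0}^{n-1} ρᵢ. -/

import Mathlib

open Finset Set

set_option linter.unusedSectionVars false

noncomputable section

/-- Functions with values in [0,1]. -/
def L1 (X : Type*) : Set (X → ℝ) := {f | ∀ x, 0 ≤ f x ∧ f x ≤ 1}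

/-- Probability mass function on a finite set. -/
def IsPMF {X : Type*} [Fintype X] (p : X → ℝ) : Prop :=
  (∀ x, 0 ≤ p x) ∧ ∑ x, p x = 1

/-- A credal set: nonempty compact convex set of pmfs. -/
def IsCredal {X : Type*} [Fintype X] (M : Set (X → ℝ)) : Prop :=
  M.Nonempty ∧ IsCompact M ∧ Convex ℝ M ∧ ∀ p ∈ M, IsPMF p

/-- Linear expectation with respect to a pmf. -/
def linExp {X : Type*} [Fintype X] (p f : X → ℝ) : ℝ := ∑ x, p x * f x

/-- Upper expectation functional of a credal set. -/
def upperExp {X : Type*} [Fintype X] (M : Set (X → ℝ)) (f : X → ℝ) : ℝ :=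
  sSup ((fun p => linExp p f) '' M)

/-- Lower expectation functional of a credal set. -/
def lowerExp {X : Type*} [Fintype X] (M : Set (X → ℝ)) (f : X → ℝ) : ℝ :=
  sInf ((fun p => linExp p f) '' M)

/-- Chebyshev (sup) distance between functions. -/
def dCheb {X : Type*} (f g : X → ℝ) : ℝ := ⨆ x, |f x - g x|

/-- Distance between two (upper) expectation functionals. -/
def dFun {X : Type*} (F G : (X → ℝ) → ℝ) : ℝ :=
  sSup ((fun f => |F f - G f|) '' L1 X)

/-- Distance between an upper and a lower expectation functional. -/
def dUL {X : Type*} (F G : (X → ℝ) → ℝ) : ℝ :=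
  sSup ((fun f => F f - G f) '' L1 X)

/-- Upper transition operator: rows are upper expectation functionals. -/
def IsUpperTrans {X : Type*} [Fintype X] (T : (X → ℝ) → (X → ℝ)) : Prop :=
  ∃ M : X → Set (X → ℝ), (∀ x, IsCredal (M x)) ∧ ∀ f x, T f x = upperExp (M x) f

/-- Matching pair of upper and lower transition operators from the same credal sets. -/
def IsTransPair {X : Type*} [Fintype X] (T Tl : (X → ℝ) → (X → ℝ)) : Prop :=
  ∃ M : X → Set (X → ℝ), (∀ x, IsCredal (M x)) ∧
    (∀ f x, T f x = upperExp (M x) f) ∧ (∀ f x, Tl f x = lowerExp (M x) f)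

/-- Distance between two (upper) transition operators. -/
def dOp {X : Type*} (T T' : (X → ℝ) → (X → ℝ)) : ℝ :=
  sSup ((fun f => dCheb (T f) (T' f)) '' L1 X)

/-- Imprecision distance between an upper and a lower transition operator. -/
def dOpUL {X : Type*} (T Tl : (X → ℝ) → (X → ℝ)) : ℝ :=
  sSup ((fun f => ⨆ x, (T f x - Tl f x)) '' L1 X)

/-- Weak coefficient of ergodicity. -/
def rho {X : Type*} (T : (X → ℝ) → (X → ℝ)) : ℝ :=
  sSup {r | ∃ f ∈ L1 X, ∃ x y : X, r = |T f x - T f y|}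

section Aux

variable {X : Type*} [Fintype X] [Nonempty X]

lemma zero_mem_L1 : (fun _ : X => (0:ℝ)) ∈ L1 X := fun _ => ⟨le_refl 0, zero_le_one⟩

lemma L1_nonempty : (L1 X).Nonempty := ⟨_, zero_mem_L1⟩

lemma linExp_le {p f : X → ℝ} {c : ℝ} (hp : IsPMF p) (h : ∀ x, f x ≤ c) :
    linExp p f ≤ c := by
  calc linExp p f ≤ ∑ x, p x * c :=
        Finset.sum_le_sum (fun x _ => mul_le_mul_of_nonneg_left (h x) (hp.1 x))
    _ = c := by rw [← Finset.sum_mul, hp.2, one_mul]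

lemma le_linExp {p f : X → ℝ} {c : ℝ} (hp : IsPMF p) (h : ∀ x, c ≤ f x) :
    c ≤ linExp p f := by
  calc c = ∑ x, p x * c := by rw [← Finset.sum_mul, hp.2, one_mul]
    _ ≤ linExp p f :=
        Finset.sum_le_sum (fun x _ => mul_le_mul_of_nonneg_left (h x) (hp.1 x))

lemma linExp_affine {p : X → ℝ} (hp : IsPMF p) (r m : ℝ) (f : X → ℝ) :
    linExp p (fun x => r * f x + m) = r * linExp p f + m := by
  simp only [linExp, mul_add, Finset.sum_add_distrib]
  rw [Finset.mul_sum, ← Finset.sum_mul, hp.2, one_mul]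
  congr 1
  exact Finset.sum_congr rfl (fun x _ => by ring)

lemma linExp_mono {p f g : X → ℝ} (hp : IsPMF p) (h : ∀ x, f x ≤ g x) :
    linExp p f ≤ linExp p g :=
  Finset.sum_le_sum (fun x _ => mul_le_mul_of_nonneg_left (h x) (hp.1 x))

variable {M : Set (X → ℝ)}

lemma upperExp_img_nonempty (hM : IsCredal M) (f : X → ℝ) :
    ((fun p => linExp p f) '' M).Nonempty := hM.1.image _

lemma upperExp_bddAbove (hM : IsCredal M) (f : X → ℝ) :
    BddAbove ((fun p => linExp p f) '' M) := by
  refine ⟨Finset.univ.sup' Finset.univ_nonempty f, ?_⟩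
  rintro _ ⟨p, hp, rfl⟩
  exact linExp_le (hM.2.2.2 p hp) (fun x => Finset.le_sup' f (Finset.mem_univ x))

lemma upperExp_le (hM : IsCredal M) {f : X → ℝ} {c : ℝ} (h : ∀ x, f x ≤ c) :
    upperExp M f ≤ c := by
  refine csSup_le (upperExp_img_nonempty hM f) ?_
  rintro _ ⟨p, hp, rfl⟩
  exact linExp_le (hM.2.2.2 p hp) h

lemma linExp_le_upperExp (hM : IsCredal M) {p : X → ℝ} (hp : p ∈ M) (f : X → ℝ) :
    linExp p f ≤ upperExp M f :=
  le_csSup (upperExp_bddAbove hM f) ⟨p, hp, rfl⟩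

lemma le_upperExp (hM : IsCredal M) {f : X → ℝ} {c : ℝ} (h : ∀ x, c ≤ f x) :
    c ≤ upperExp M f := by
  obtain ⟨p, hp⟩ := hM.1
  exact (le_linExp (hM.2.2.2 p hp) h).trans (linExp_le_upperExp hM hp f)

lemma upperExp_affine (hM : IsCredal M) {r : ℝ} (m : ℝ) (f : X → ℝ) (hr : 0 ≤ r) :
    upperExp M (fun x => r * f x + m) = r * upperExp M f + m := by
  rcases eq_or_lt_of_le hr with hr0 | hr0
  · subst hr0
    simp only [zero_mul, zero_add]
    exact le_antisymm (upperExp_le hM (fun _ => le_rfl)) (le_upperExp hM (fun _ => le_rfl))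
  · apply le_antisymm
    · refine csSup_le (upperExp_img_nonempty hM _) ?_
      rintro _ ⟨p, hp, rfl⟩
      show linExp p (fun x => r * f x + m) ≤ _
      rw [linExp_affine (hM.2.2.2 p hp)]
      have := linExp_le_upperExp hM hp f
      nlinarith
    · have key : ∀ p ∈ M, linExp p f ≤ (upperExp M (fun x => r * f x + m) - m) / r := by
        intro p hp
        rw [le_div_iff₀ hr0]
        have := linExp_le_upperExp hM hp (fun x => r * f x + m)
        rw [linExp_affine (hM.2.2.2 p hp)] at this
        nlinarith
      have : upperExp M f ≤ (upperExp M (fun x => r * f x + m) - m) / r := by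
        refine csSup_le (upperExp_img_nonempty hM f) ?_
        rintro _ ⟨p, hp, rfl⟩
        exact key p hp
      rw [le_div_iff₀ hr0] at this
      nlinarith

/-- Nice functional: affine-equivariant and sup-Lipschitz. -/
def NiceF {X : Type*} [Fintype X] (F : (X → ℝ) → ℝ) : Prop :=
  (∀ (r m : ℝ) (f : X → ℝ), 0 ≤ r → F (fun x => r * f x + m) = r * F f + m) ∧
  (∀ (f g : X → ℝ) (c : ℝ), (∀ x, |f x - g x| ≤ c) → |F f - F g| ≤ c)

lemma upperExp_nice (hM : IsCredal M) : NiceF (upperExp M) := by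
  constructor
  · intro r m f hr; exact upperExp_affine hM m f hr
  · intro f g c h
    have key : ∀ (u v : X → ℝ), (∀ x, u x ≤ v x + c) → upperExp M u ≤ upperExp M v + c := by
      intro u v huv
      refine csSup_le (upperExp_img_nonempty hM u) ?_
      rintro _ ⟨p, hp, rfl⟩
      show linExp p u ≤ _
      have h1 : linExp p u ≤ linExp p (fun x => 1 * v x + c) :=
        linExp_mono (hM.2.2.2 p hp) (fun x => by rw [one_mul]; exact huv x)
      rw [linExp_affine (hM.2.2.2 p hp), one_mul] at h1
      linarith [linExp_le_upperExp hM hp v]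
    rw [abs_sub_le_iff]
    constructor
    · have := key f g (fun x => by linarith [(abs_le.1 (h x)).2]); linarith
    · have := key g f (fun x => by linarith [(abs_le.1 (h x)).1]); linarith

lemma niceF_const {F : (X → ℝ) → ℝ} (hF : NiceF F) (m : ℝ) : F (fun _ => m) = m := by
  have := hF.1 0 m (fun _ => 0) le_rfl
  simpa using this

variable {T T' S : (X → ℝ) → (X → ℝ)}

lemma trans_mapsL1 (hT : IsUpperTrans T) {f : X → ℝ} (hf : f ∈ L1 X) : T f ∈ L1 X := by
  obtain ⟨M, hM, hTdef⟩ := hT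
  intro x
  rw [hTdef]
  exact ⟨le_upperExp (hM x) (fun y => (hf y).1), upperExp_le (hM x) (fun y => (hf y).2)⟩

lemma trans_affine (hT : IsUpperTrans T) {r : ℝ} (m : ℝ) (f : X → ℝ) (hr : 0 ≤ r) :
    T (fun x => r * f x + m) = fun x => r * T f x + m := by
  obtain ⟨M, hM, hTdef⟩ := hT
  funext x
  rw [hTdef, hTdef, upperExp_affine (hM x) m f hr]

lemma trans_lip (hT : IsUpperTrans T) {f g : X → ℝ} {c : ℝ}
    (h : ∀ x, |f x - g x| ≤ c) : ∀ x, |T f x - T g x| ≤ c := by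
  obtain ⟨M, hM, hTdef⟩ := hT
  intro x
  rw [hTdef, hTdef]
  exact (upperExp_nice (hM x)).2 f g c h

lemma niceF_comp {F : (X → ℝ) → ℝ} (hF : NiceF F) (hT : IsUpperTrans T) :
    NiceF (fun f => F (T f)) := by
  constructor
  · intro r m f hr
    simp only
    rw [trans_affine hT m f hr, hF.1 r m (T f) hr]
  · intro f g c h
    exact hF.2 _ _ _ (trans_lip hT h)

lemma iter_mapsL1 (hT : IsUpperTrans T) (n : ℕ) {f : X → ℝ} (hf : f ∈ L1 X) :
    T^[n] f ∈ L1 X := by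
  induction n with
  | zero => simpa using hf
  | succ n ih => rw [Function.iterate_succ_apply']; exact trans_mapsL1 hT ih

lemma rho_bddAbove (hS : ∀ f ∈ L1 X, S f ∈ L1 X) :
    BddAbove {r | ∃ f ∈ L1 X, ∃ x y : X, r = |S f x - S f y|} := by
  refine ⟨1, ?_⟩
  rintro r ⟨f, hf, x, y, rfl⟩
  have h := hS f hf
  rw [abs_sub_le_iff]
  constructor <;> [linarith [(h x).1, (h x).2, (h y).1, (h y).2];
    linarith [(h x).1, (h x).2, (h y).1, (h y).2]]

lemma abs_sub_le_rho (hS : ∀ f ∈ L1 X, S f ∈ L1 X) {f : X → ℝ} (hf : f ∈ L1 X) (x y : X) :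
    |S f x - S f y| ≤ rho S :=
  le_csSup (rho_bddAbove hS) ⟨f, hf, x, y, rfl⟩

lemma rho_nonneg (hS : ∀ f ∈ L1 X, S f ∈ L1 X) : 0 ≤ rho S := by
  have x : X := Classical.arbitrary X
  exact (abs_nonneg _).trans (abs_sub_le_rho hS zero_mem_L1 x x)

lemma dCheb_le {f g : X → ℝ} {c : ℝ} (h : ∀ x, |f x - g x| ≤ c) : dCheb f g ≤ c :=
  ciSup_le h

lemma le_dCheb (f g : X → ℝ) (x : X) : |f x - g x| ≤ dCheb f g := by
  have hb : BddAbove (Set.range fun x => |f x - g x|) :=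
    Set.Finite.bddAbove (Set.finite_range _)
  exact le_ciSup hb x

lemma dFun_bdd {F G : (X → ℝ) → ℝ} (hF : NiceF F) (hG : NiceF G) :
    BddAbove ((fun f => |F f - G f|) '' L1 X) := by
  refine ⟨2, ?_⟩
  rintro _ ⟨f, hf, rfl⟩
  have h0F : F (fun _ => (0:ℝ)) = 0 := niceF_const hF 0
  have h0G : G (fun _ => (0:ℝ)) = 0 := niceF_const hG 0
  have hF1 : |F f - F (fun _ => 0)| ≤ 1 :=
    hF.2 _ _ _ (fun x => by rw [sub_zero, abs_of_nonneg (hf x).1]; exact (hf x).2)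
  have hG1 : |G f - G (fun _ => 0)| ≤ 1 :=
    hG.2 _ _ _ (fun x => by rw [sub_zero, abs_of_nonneg (hf x).1]; exact (hf x).2)
  rw [h0F] at hF1; rw [h0G] at hG1
  rw [abs_sub_le_iff] at hF1 hG1 ⊢
  constructor <;> [linarith [hF1.1, hF1.2, hG1.1, hG1.2];
    linarith [hF1.1, hF1.2, hG1.1, hG1.2]]

lemma le_dFun {F G : (X → ℝ) → ℝ} (hF : NiceF F) (hG : NiceF G) {f : X → ℝ}
    (hf : f ∈ L1 X) : |F f - G f| ≤ dFun F G :=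
  le_csSup (dFun_bdd hF hG) ⟨f, hf, rfl⟩

lemma dFun_le {F G : (X → ℝ) → ℝ} {c : ℝ} (h : ∀ f ∈ L1 X, |F f - G f| ≤ c) :
    dFun F G ≤ c := by
  refine csSup_le (L1_nonempty.image _) ?_
  rintro _ ⟨f, hf, rfl⟩
  exact h f hf

lemma dOp_bdd (hT : IsUpperTrans T) (hT' : IsUpperTrans T') :
    BddAbove ((fun f => dCheb (T f) (T' f)) '' L1 X) := by
  refine ⟨1, ?_⟩
  rintro _ ⟨f, hf, rfl⟩
  refine dCheb_le (fun x => ?_)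
  have h1 := trans_mapsL1 hT hf x
  have h2 := trans_mapsL1 hT' hf x
  rw [abs_sub_le_iff]
  exact ⟨by linarith [h1.1, h1.2, h2.1, h2.2], by linarith [h1.1, h1.2, h2.1, h2.2]⟩

lemma le_dOp (hT : IsUpperTrans T) (hT' : IsUpperTrans T') {f : X → ℝ} (hf : f ∈ L1 X) :
    dCheb (T f) (T' f) ≤ dOp T T' :=
  le_csSup (dOp_bdd hT hT') ⟨f, hf, rfl⟩

/-- Key contraction lemma: `|F (S f) - G (S f)| ≤ ρ(S) * d(F,G)`. -/
lemma keyA {F G : (X → ℝ) → ℝ} (hF : NiceF F) (hG : NiceF G)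
    (hS : ∀ f ∈ L1 X, S f ∈ L1 X) {f : X → ℝ} (hf : f ∈ L1 X) :
    |F (S f) - G (S f)| ≤ rho S * dFun F G := by
  set g := S f with hg
  obtain ⟨x₀, -, hx₀⟩ := Finset.exists_min_image Finset.univ g ⟨Classical.arbitrary X, Finset.mem_univ _⟩
  set m := g x₀ with hm
  set r := rho S with hrdef
  have hr0 : 0 ≤ r := rho_nonneg hS
  have hsub : ∀ x, g x - m ≤ r :=
    fun x => (le_abs_self _).trans (abs_sub_le_rho hS hf x x₀)
  have hmle : ∀ x, m ≤ g x := fun x => hx₀ x (Finset.mem_univ x)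
  rcases eq_or_lt_of_le hr0 with hr | hr
  · have hconst : g = fun _ => m := funext fun x => le_antisymm (by linarith [hsub x]) (hmle x)
    rw [hconst, niceF_const hF, niceF_const hG]
    simp [← hr]
  · set h : X → ℝ := fun x => (g x - m) / r with hh
    have hhL1 : h ∈ L1 X := fun x =>
      ⟨div_nonneg (by linarith [hmle x]) hr0, (div_le_one hr).2 (hsub x)⟩
    have hgeq : g = fun x => r * h x + m := funext fun x => by
      show g x = r * ((g x - m) / r) + m
      rw [mul_div_assoc', mul_div_cancel_left₀ _ hr.ne']; ring
    rw [hgeq, hF.1 r m h hr0, hG.1 r m h hr0]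
    have : |r * F h + m - (r * G h + m)| = r * |F h - G h| := by
      have heq : r * F h + m - (r * G h + m) = r * (F h - G h) := by ring
      rw [heq, abs_mul, abs_of_pos hr]
    rw [this]
    exact mul_le_mul_of_nonneg_left (le_dFun hF hG hhL1) hr0

/-- Accumulation lemma. -/
lemma keyB (hT : IsUpperTrans T) (hT' : IsUpperTrans T') :
    ∀ (n : ℕ) (F : (X → ℝ) → ℝ), NiceF F → ∀ f ∈ L1 X,
      |F (T^[n] f) - F (T'^[n] f)| ≤ dOp T T' * ∑ i ∈ Finset.range n, rho (T^[i]) := by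
  intro n
  induction n with
  | zero => intro F hF f hf; simp
  | succ n ih =>
    intro F hF f hf
    rw [Function.iterate_succ_apply', Function.iterate_succ_apply']
    have hFT : NiceF (fun g => F (T g)) := niceF_comp hF hT
    have hFT' : NiceF (fun g => F (T' g)) := niceF_comp hF hT'
    have hmaps : ∀ g ∈ L1 X, T^[n] g ∈ L1 X := fun g hg => iter_mapsL1 hT n hg
    have h1 : |F (T (T^[n] f)) - F (T' (T^[n] f))| ≤ rho (T^[n]) * dOp T T' := by
      have hkey := keyA hFT hFT' hmaps hf
      refine hkey.trans (mul_le_mul_of_nonneg_left ?_ (rho_nonneg hmaps))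
      refine dFun_le (fun g hg => ?_)
      exact (hF.2 _ _ _ (fun x => le_dCheb (T g) (T' g) x)).trans (le_dOp hT hT' hg)
    have h2 : |F (T' (T^[n] f)) - F (T' (T'^[n] f))| ≤
        dOp T T' * ∑ i ∈ Finset.range n, rho (T^[i]) := ih (fun g => F (T' g)) hFT' f hf
    calc |F (T (T^[n] f)) - F (T' (T'^[n] f))|
        ≤ |F (T (T^[n] f)) - F (T' (T^[n] f))| + |F (T' (T^[n] f)) - F (T' (T'^[n] f))| :=
          abs_sub_le _ _ _
      _ ≤ rho (T^[n]) * dOp T T' + dOp T T' * ∑ i ∈ Finset.range n, rho (T^[i]) :=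
          add_le_add h1 h2
      _ = dOp T T' * ∑ i ∈ Finset.range (n + 1), rho (T^[i]) := by
          rw [Finset.sum_range_succ]; ring

end Aux

theorem stmt12 {X : Type*} [Fintype X] [Nonempty X]
    (M0 M0' : Set (X → ℝ)) (h0 : IsCredal M0) (h0' : IsCredal M0')
    (T T' : (X → ℝ) → (X → ℝ)) (hT : IsUpperTrans T) (hT' : IsUpperTrans T')
    (n : ℕ) :
    dFun (fun f => upperExp M0 (T^[n] f)) (fun f => upperExp M0' (T'^[n] f)) ≤
      dFun (upperExp M0) (upperExp M0') * rho (T^[n]) +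
        dOp T T' * ∑ i ∈ Finset.range n, rho (T^[i]) := by
  have hE : NiceF (upperExp M0) := upperExp_nice h0
  have hE' : NiceF (upperExp M0') := upperExp_nice h0'
  have hmaps : ∀ g ∈ L1 X, T^[n] g ∈ L1 X := fun g hg => iter_mapsL1 hT n hg
  refine dFun_le (fun f hf => ?_)
  have h1 : |upperExp M0 (T^[n] f) - upperExp M0' (T^[n] f)| ≤
      rho (T^[n]) * dFun (upperExp M0) (upperExp M0') := keyA hE hE' hmaps hf
  have h2 : |upperExp M0' (T^[n] f) - upperExp M0' (T'^[n] f)| ≤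
      dOp T T' * ∑ i ∈ Finset.range n, rho (T^[i]) := keyB hT hT' n (upperExp M0') hE' f hf
  calc |upperExp M0 (T^[n] f) - upperExp M0' (T'^[n] f)|
      ≤ |upperExp M0 (T^[n] f) - upperExp M0' (T^[n] f)| +
        |upperExp M0' (T^[n] f) - upperExp M0' (T'^[n] f)| := abs_sub_le _ _ _
    _ ≤ dFun (upperExp M0) (upperExp M0') * rho (T^[n]) +
        dOp T T' * ∑ i ∈ Finset.range n, rho (T^[i]) := by
          rw [mul_comm]; exact add_le_add h1 h2
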